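/- Let G = (V,E) be a finite simple graph with edges indexed e_1,…,e_k. Define the graph G̃ with vertex set V × {0,1}^k, where for each edge e_i = (u,v) ∈ E and each s ∈ {0,1}^k there is an edge between (u,s) and (v, s ⊕ 1_i) (1_i flips the i-th coordinate). Then the projection (v,s) ↦ v is a covering map from G̃ onto G of fold number 2^k, and for every cycle in G̃, its projection to G traverses each edge of G an even number of times; consequently, if G contains a cycle then girth(G̃) ≥ 2·girth(G). -/

import Mathlib

attribute [local instance] Classical.propDecidable

/-- A covering map of (simple) graphs: a graph homomorphism `π : G' → G` whose restriction
to the neighbors of each vertex `v'` is a bijection onto the neighbors of `π v'`. -/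
def IsGraphCoveringMap {V W : Type*} (G' : SimpleGraph V) (G : SimpleGraph W) (π : V → W) : Prop :=
  (∀ ⦃a b : V⦄, G'.Adj a b → G.Adj (π a) (π b)) ∧
  ∀ v : V, Set.BijOn π (G'.neighborSet v) (G.neighborSet (π v))

/-- The `2^k`-lift of `G` obtained by flipping, across each edge `e_i`, the `i`-th bit of a
`{0,1}`-vector of length `k` (Proposition 4.4). -/
def flipLift {V : Type*} (G : SimpleGraph V) {k : ℕ} (e : Fin k ≃ G.edgeSet) :
    SimpleGraph (V × (Fin k → ZMod 2)) where
  Adj p q := ∃ h : G.Adj p.1 q.1,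
    q.2 = p.2 + Pi.single (e.symm ⟨s(p.1, q.1), (SimpleGraph.mem_edgeSet G).2 h⟩) 1
  symm := by
    constructor
    intro p q hpq
    obtain ⟨h, hs⟩ := hpq
    refine ⟨h.symm, ?_⟩
    have hswap : (⟨s(q.1, p.1), (SimpleGraph.mem_edgeSet G).2 h.symm⟩ : G.edgeSet)
        = ⟨s(p.1, q.1), (SimpleGraph.mem_edgeSet G).2 h⟩ := by
      apply Subtype.ext
      exact Sym2.eq_swap
    rw [hswap, hs, add_assoc, ← Pi.single_add]
    have h2 : (1 : ZMod 2) + 1 = 0 := by decide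
    rw [h2, Pi.single_zero, add_zero]
  loopless := by
    constructor
    intro p hp
    obtain ⟨h, -⟩ := hp
    exact G.loopless.irrefl p.1 h

/-- The projection `(v,s) ↦ v` as a graph homomorphism `flipLift G e →g G`. -/
def flipLiftHom {V : Type*} (G : SimpleGraph V) {k : ℕ} (e : Fin k ≃ G.edgeSet) :
    flipLift G e →g G :=
  ⟨Prod.fst, fun hab => hab.choose⟩

section Aux

variable {V : Type*} {G : SimpleGraph V}

/-- A counting lemma: if each element of a duplicate-free list `l₁` occurs in `l₂` an even
(hence, being positive, at least two) number of times, then `2 * l₁.length ≤ l₂.length`. -/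
lemma count_double_le {α : Type*} [DecidableEq α] (l₁ l₂ : List α) (h₁ : l₁.Nodup)
    (hsub : ∀ a ∈ l₁, a ∈ l₂) (heven : ∀ a ∈ l₁, Even (l₂.count a)) :
    2 * l₁.length ≤ l₂.length := by
  have hcard : l₁.toFinset.card = l₁.length := List.toFinset_card_of_nodup h₁
  calc 2 * l₁.length = ∑ _a ∈ l₁.toFinset, 2 := by
        rw [Finset.sum_const, smul_eq_mul, hcard, mul_comm]
    _ ≤ ∑ a ∈ l₁.toFinset, l₂.count a := by
        refine Finset.sum_le_sum fun a ha => ?_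
        rw [List.mem_toFinset] at ha
        have hpos : 0 < l₂.count a := List.count_pos_iff.mpr (hsub a ha)
        exact Nat.le_of_dvd hpos (heven a ha).two_dvd
    _ ≤ ∑ a ∈ l₂.toFinset, l₂.count a := by
        refine Finset.sum_le_sum_of_subset (fun a ha => ?_)
        rw [List.mem_toFinset] at ha ⊢
        exact hsub a ha
    _ = l₂.length := List.sum_toFinset_count_eq_length l₂

/-- In a walk with duplicate-free support, an edge incident to the initial vertex must be
the first edge. -/
lemma edge_start_eq {u v c : V} (q : G.Walk u v) (hq : q.support.Nodup)
    (hc : s(u, c) ∈ q.edges) :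
    ∃ (h : G.Adj u c) (r : G.Walk c v), q = SimpleGraph.Walk.cons h r := by
  cases q with
  | nil => simp at hc
  | @cons _ d _ h r =>
    rw [SimpleGraph.Walk.edges_cons, List.mem_cons] at hc
    rcases hc with hc | hc
    · have hcd : c = d := by
        rcases Sym2.eq_iff.mp hc with ⟨-, h2⟩ | ⟨h1, -⟩
        · exact h2
        · exact absurd h1 h.ne
      subst hcd
      exact ⟨h, r, rfl⟩
    · exfalso
      have hu := SimpleGraph.Walk.fst_mem_support_of_mem_edges r hc
      rw [SimpleGraph.Walk.support_cons] at hq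
      exact (List.nodup_cons.mp hq).1 hu

/-- Any closed walk of positive length without two consecutive equal edges contains a cycle
all of whose edges occur among the edges of the walk. -/
lemma exists_cycle_of_closed (n : ℕ) : ∀ {u : V} (w : G.Walk u u), w.length = n →
    0 < w.length → w.edges.Chain' (· ≠ ·) →
    ∃ (v : V) (C : G.Walk v v), C.IsCycle ∧ ∀ ε ∈ C.edges, ε ∈ w.edges := by
  induction n using Nat.strong_induction_on with
  | _ n ih =>
  intro u w hlen hpos hch
  cases w with
  | nil => simp at hpos
  | @cons _ b _ h p =>
    by_cases hnd : p.support.Nodup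
    · refine ⟨u, SimpleGraph.Walk.cons h p, ?_, fun ε hε => hε⟩
      rw [SimpleGraph.Walk.cons_isCycle_iff]
      refine ⟨SimpleGraph.Walk.IsPath.mk' hnd, fun hmem => ?_⟩
      have hmem' : s(u, b) ∈ p.reverse.edges := by
        rw [SimpleGraph.Walk.edges_reverse, List.mem_reverse]; exact hmem
      have hnd' : p.reverse.support.Nodup := by
        rw [SimpleGraph.Walk.support_reverse]; exact List.nodup_reverse.mpr hnd
      obtain ⟨h', r, hq⟩ := edge_start_eq p.reverse hnd' hmem'
      have hrpath : r.IsPath := by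
        have hrn := hnd'
        rw [hq, SimpleGraph.Walk.support_cons, List.nodup_cons] at hrn
        exact SimpleGraph.Walk.IsPath.mk' hrn.2
      have hrnil : r = SimpleGraph.Walk.nil := by
        have hpn : (⟨r, hrpath⟩ : G.Path b b) = SimpleGraph.Path.nil :=
          SimpleGraph.Path.loop_eq _
        exact congrArg Subtype.val hpn
      subst hrnil
      have hpe : p.edges = [s(u, b)] := by
        have h1 : p.reverse.edges = [s(u, b)] := by rw [hq]; simp
        rw [SimpleGraph.Walk.edges_reverse] at h1
        have h2 := congrArg List.reverse h1
        simpa using h2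
      rw [SimpleGraph.Walk.edges_cons, hpe] at hch
      exact (List.isChain_cons_cons.mp hch).1 rfl
    · obtain ⟨x, hx2⟩ : ∃ x, 2 ≤ p.support.count x := by
        by_contra hcon
        push_neg at hcon
        exact hnd (List.nodup_iff_count_le_one.mpr fun a => by have := hcon a; omega)
      have hxs : x ∈ p.support := by
        rw [← List.count_pos_iff]; omega
      have hspec := SimpleGraph.Walk.take_spec p hxs
      have hc1 : (p.takeUntil x hxs).support.count x = 1 :=
        SimpleGraph.Walk.count_support_takeUntil_eq_one p hxs
      have hsupp : p.support
          = (p.takeUntil x hxs).support ++ (p.dropUntil x hxs).support.tail := by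
        conv_lhs => rw [← hspec]
        exact SimpleGraph.Walk.support_append _ _
      have hxt : x ∈ (p.dropUntil x hxs).support.tail := by
        rw [← List.count_pos_iff]
        have h2' := hx2
        rw [hsupp, List.count_append] at h2'
        omega
      cases ht2c : p.dropUntil x hxs with
      | nil => rw [ht2c] at hxt; simp at hxt
      | @cons _ d _ h₂ r =>
        rw [ht2c, SimpleGraph.Walk.support_cons, List.tail_cons] at hxt
        have hxr : x ∈ r.support := hxt
        set m : G.Walk x x := SimpleGraph.Walk.cons h₂ (r.takeUntil x hxr) with hm
        have hpedges : p.edges = (p.takeUntil x hxs).edges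
            ++ (s(x, d) :: ((r.takeUntil x hxr).edges ++ (r.dropUntil x hxr).edges)) := by
          conv_lhs => rw [← hspec]
          rw [SimpleGraph.Walk.edges_append, ht2c, SimpleGraph.Walk.edges_cons]
          congr 1
          congr 1
          conv_lhs => rw [← SimpleGraph.Walk.take_spec r hxr]
          exact SimpleGraph.Walk.edges_append _ _
        have hinfix : m.edges <:+: (SimpleGraph.Walk.cons h p).edges := by
          refine ⟨s(u, b) :: (p.takeUntil x hxs).edges, (r.dropUntil x hxr).edges, ?_⟩
          simp only [hm, SimpleGraph.Walk.edges_cons, hpedges]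
          simp
        have hplen : p.length = (p.takeUntil x hxs).length + (r.length + 1) := by
          conv_lhs => rw [← hspec]
          rw [SimpleGraph.Walk.length_append, ht2c, SimpleGraph.Walk.length_cons]
        have hmlen : m.length = (r.takeUntil x hxr).length + 1 := by
          rw [hm, SimpleGraph.Walk.length_cons]
        have hrle : (r.takeUntil x hxr).length ≤ r.length :=
          SimpleGraph.Walk.length_takeUntil_le r hxr
        have hwl : (SimpleGraph.Walk.cons h p).length = p.length + 1 :=
          SimpleGraph.Walk.length_cons _ _
        have hlt : m.length < n := by omega
        obtain ⟨v, C, hC, hsubC⟩ := ih m.length hlt m rfl (by omega) (hch.infix hinfix)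
        exact ⟨v, C, hC, fun ε hε => hinfix.subset (hsubC ε hε)⟩

end Aux
section LiftAux

variable {V : Type*} {G : SimpleGraph V} {k : ℕ}

@[simp] lemma flipLiftHom_apply (e : Fin k ≃ G.edgeSet) (p : V × (Fin k → ZMod 2)) :
    flipLiftHom G e p = p.1 := rfl

lemma flipLift_adj_exists (e : Fin k ≃ G.edgeSet) {p q : V × (Fin k → ZMod 2)}
    (h : (flipLift G e).Adj p q) :
    ∃ hadj : G.Adj p.1 q.1,
      q.2 = p.2 + Pi.single (e.symm ⟨s(p.1, q.1), (SimpleGraph.mem_edgeSet G).2 hadj⟩) 1 := h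

/-- Two-step determinacy: in the flip lift, a vertex is determined by a neighbor together
with the projection of the vertex. -/
lemma flipLift_adj_determined (e : Fin k ≃ G.edgeSet) {p q r : V × (Fin k → ZMod 2)}
    (h1 : (flipLift G e).Adj p q) (h2 : (flipLift G e).Adj q r) (hfst : p.1 = r.1) :
    p = r := by
  obtain ⟨ha1, hs1⟩ := flipLift_adj_exists e h1
  obtain ⟨ha2, hs2⟩ := flipLift_adj_exists e h2
  have hsym : (⟨s(q.1, r.1), (SimpleGraph.mem_edgeSet G).2 ha2⟩ : G.edgeSet)
      = ⟨s(p.1, q.1), (SimpleGraph.mem_edgeSet G).2 ha1⟩ := by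
    apply Subtype.ext
    show s(q.1, r.1) = s(p.1, q.1)
    rw [hfst]
    exact Sym2.eq_swap
  have hr2 : r.2 = p.2 := by
    rw [hs2, hsym, hs1, add_assoc, ← Pi.single_add]
    have h2' : (1 : ZMod 2) + 1 = 0 := by decide
    rw [h2', Pi.single_zero, add_zero]
  exact Prod.ext hfst hr2.symm

/-- The projection of a walk with no repeated edges has no two consecutive equal edges. -/
lemma proj_edges_chain' (e : Fin k ≃ G.edgeSet) :
    ∀ {x y : V × (Fin k → ZMod 2)} (p : (flipLift G e).Walk x y), p.edges.Nodup →
      ((p.map (flipLiftHom G e)).edges).Chain' (· ≠ ·) := by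
  intro x y p
  induction p with
  | nil => intro _; simp; exact List.isChain_nil
  | @cons a b c h q ih =>
    intro hnd
    rw [SimpleGraph.Walk.edges_cons] at hnd
    rw [SimpleGraph.Walk.map_cons, SimpleGraph.Walk.edges_cons]
    refine List.isChain_cons.mpr ⟨?_, ih (List.Nodup.of_cons hnd)⟩
    intro ε hε
    cases q with
    | nil => simp at hε
    | @cons _ d _ h' r =>
      rw [SimpleGraph.Walk.map_cons, SimpleGraph.Walk.edges_cons, List.head?_cons,
        Option.mem_some_iff] at hε
      subst hε
      simp only [flipLiftHom_apply, Sym2.map_pair_eq]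
      intro heq
      have had : a.1 = d.1 := by
        rcases Sym2.eq_iff.mp heq with ⟨h1, -⟩ | ⟨h1, -⟩
        · exact absurd h1 (flipLift_adj_exists e h).choose.ne
        · exact h1
      have had' : a = d := flipLift_adj_determined e h h' had
      have hne : s(a, b) ≠ s(b, d) := (List.nodup_cons.mp hnd).1 ∘ (by
        intro hh; rw [SimpleGraph.Walk.edges_cons, hh]; exact List.mem_cons_self)
      exact hne (by rw [had']; exact Sym2.eq_swap)

/-- Parity bookkeeping: the `i`-th coordinate changes along a walk exactly by the parity of
the number of times the projected walk traverses the edge `e i`. -/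
lemma flipLift_parity (e : Fin k ≃ G.edgeSet) :
    ∀ {x y : V × (Fin k → ZMod 2)} (p : (flipLift G e).Walk x y) (i : Fin k),
      y.2 i = x.2 i
        + ((((p.map (flipLiftHom G e)).edges).count ((e i : G.edgeSet) : Sym2 V)) : ZMod 2) := by
  intro x y p
  induction p with
  | nil => intro i; simp
  | @cons a b c h q ih =>
    intro i
    obtain ⟨ha, hs⟩ := flipLift_adj_exists e h
    rw [SimpleGraph.Walk.map_cons, SimpleGraph.Walk.edges_cons, List.count_cons]
    simp only [flipLiftHom_apply, Sym2.map_pair_eq]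
    rw [ih i, hs]
    simp only [Pi.add_apply, Pi.single_apply]
    push_cast
    by_cases hij : i = e.symm ⟨s(a.1, b.1), (SimpleGraph.mem_edgeSet G).2 ha⟩
    · have hb : ((e i : G.edgeSet) : Sym2 V) = s(a.1, b.1) := by
        rw [hij, Equiv.apply_symm_apply]
      have hbeq : (s(a.1, b.1) == ((e i : G.edgeSet) : Sym2 V)) = true :=
        beq_iff_eq.mpr hb.symm
      simp only [if_pos hij, hbeq, if_true]
      ring_nf
      congr! 2
    · have hb : s(a.1, b.1) ≠ ((e i : G.edgeSet) : Sym2 V) := by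
        intro hh
        exact hij (by rw [Equiv.eq_symm_apply]; exact Subtype.ext hh.symm)
      have hbeq : (s(a.1, b.1) == ((e i : G.edgeSet) : Sym2 V)) = false :=
        beq_eq_false_iff_ne.mpr hb
      simp only [if_neg hij, hbeq, if_false, Bool.false_eq_true]
      ring_nf
      congr! 2

end LiftAux

/-- **Proposition 4.4 (the `2^k`-lift construction)**: for a finite graph `G` with edges
enumerated by `e : Fin k ≃ G.edgeSet`, the projection `(v,s) ↦ v` is a covering map from
`flipLift G e` onto `G` of fold number `2^k`; the projection of every cycle of the lift
traverses each edge of `G` an even number of times; consequently, if `G` contains a cycle,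
then `girth(flipLift G e) ≥ 2·girth(G)`. -/
theorem flipLift_covering_and_girth (V : Type) [Fintype V] (G : SimpleGraph V)
    (k : ℕ) (e : Fin k ≃ G.edgeSet) :
    IsGraphCoveringMap (flipLift G e) G Prod.fst ∧
    (∀ v : V, Nat.card (Prod.fst ⁻¹' {v} : Set (V × (Fin k → ZMod 2))) = 2 ^ k) ∧
    (∀ (x : V × (Fin k → ZMod 2)) (c : (flipLift G e).Walk x x), c.IsCycle →
      ∀ ε : Sym2 V, Even (List.count ε ((c.map (flipLiftHom G e)).edges))) ∧
    (¬ G.IsAcyclic → 2 * G.egirth ≤ (flipLift G e).egirth) := by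
  -- Part 3 first (it is also used in part 4).
  have part3 : ∀ (x : V × (Fin k → ZMod 2)) (c : (flipLift G e).Walk x x), c.IsCycle →
      ∀ ε : Sym2 V, Even (List.count ε ((c.map (flipLiftHom G e)).edges)) := by
    intro x c _hc ε
    by_cases hε : ε ∈ G.edgeSet
    · have hεi : ((e (e.symm ⟨ε, hε⟩) : G.edgeSet) : Sym2 V) = ε := by
        rw [Equiv.apply_symm_apply]
      have hkey := flipLift_parity e c (e.symm ⟨ε, hε⟩)
      have hzero : (((((c.map (flipLiftHom G e)).edges).count
          ((e (e.symm ⟨ε, hε⟩) : G.edgeSet) : Sym2 V)) : ℕ) : ZMod 2) = 0 :=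
        (left_eq_add.mp hkey)
      rw [ZMod.natCast_eq_zero_iff] at hzero
      rw [hεi] at hzero
      obtain ⟨m, hm⟩ := hzero
      exact ⟨m, by omega⟩
    · have hnm : ε ∉ (c.map (flipLiftHom G e)).edges := fun hmem =>
        hε (SimpleGraph.Walk.edges_subset_edgeSet _ hmem)
      rw [List.count_eq_zero.mpr hnm]
      exact Even.zero
  refine ⟨⟨fun a b hab => hab.choose, fun v => ⟨?_, ?_, ?_⟩⟩, ?_, part3, ?_⟩
  · -- MapsTo
    intro q hq
    exact (flipLift_adj_exists e hq).choose
  · -- InjOn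
    intro q hq r hr hqr
    obtain ⟨h1, e1⟩ := flipLift_adj_exists e hq
    obtain ⟨h2, e2⟩ := flipLift_adj_exists e hr
    refine Prod.ext hqr ?_
    have hsub : (⟨s(v.1, q.1), (SimpleGraph.mem_edgeSet G).2 h1⟩ : G.edgeSet)
        = ⟨s(v.1, r.1), (SimpleGraph.mem_edgeSet G).2 h2⟩ := by
      apply Subtype.ext
      show s(v.1, q.1) = s(v.1, r.1)
      rw [hqr]
    rw [e1, e2, hsub]
  · -- SurjOn
    intro w hw
    have hw' : G.Adj v.1 w := hw
    refine ⟨(w, v.2 + Pi.single (e.symm ⟨s(v.1, w), (SimpleGraph.mem_edgeSet G).2 hw'⟩) 1),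
      ⟨hw', rfl⟩, rfl⟩
  · -- fibers
    intro v
    have hequiv : (Prod.fst ⁻¹' {v} : Set (V × (Fin k → ZMod 2))) ≃ (Fin k → ZMod 2) :=
      { toFun := fun x => x.1.2
        invFun := fun s => ⟨(v, s), rfl⟩
        left_inv := fun x => by
          apply Subtype.ext
          have hx : x.1.1 = v := x.2
          exact Prod.ext hx.symm rfl
        right_inv := fun s => rfl }
    rw [Nat.card_congr hequiv, Nat.card_eq_fintype_card, Fintype.card_fun]
    simp
  · -- girth
    intro _hac
    rw [SimpleGraph.le_egirth]
    intro a c hc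
    set w := c.map (flipLiftHom G e) with hw
    have hch : w.edges.Chain' (· ≠ ·) := proj_edges_chain' e c hc.isTrail.edges_nodup
    have hpos : 0 < w.length := by
      rw [hw, SimpleGraph.Walk.length_map]
      have := hc.three_le_length
      omega
    obtain ⟨v, C, hC, hsub⟩ := exists_cycle_of_closed w.length w rfl hpos hch
    have hg : G.egirth ≤ C.length := SimpleGraph.le_egirth.mp le_rfl v C hC
    have hcount : 2 * C.length ≤ c.length := by
      have h1 : 2 * C.edges.length ≤ w.edges.length :=
        count_double_le C.edges w.edges hC.isTrail.edges_nodup hsub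
          (fun ε hε => part3 a c hc ε)
      rw [SimpleGraph.Walk.length_edges, SimpleGraph.Walk.length_edges] at h1
      rw [hw, SimpleGraph.Walk.length_map] at h1
      exact h1
    calc 2 * G.egirth ≤ 2 * (C.length : ℕ∞) := mul_le_mul_right hg 2
      _ = ((2 * C.length : ℕ) : ℕ∞) := by push_cast; ring
      _ ≤ (c.length : ℕ∞) := by exact_mod_cast hcount
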